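/- arXiv:2102.07126 — 2 statements merged into one kernel-verified Lean document; each statement's English description precedes it below -/
import Mathlib

section
/- Let G be a noncompact locally compact second countable group, (Y, γ) a standard nonatomic probability space, T = (T_g)_{g∈G} a mixing γ-preserving Borel G-action, and 𝐁 = (B_n)_{n≥1} measurable subsets with γ(B_n) = 1/2 for all n, such that for every compact K ⊆ G, ∑_{n=1}^∞ sup_{g∈K} γ(T_g B_n △ B_n) < ∞. Let μ = γ^𝐁 on X = Y^ℕ and 𝐓_g := T_g × T_g × ⋯. Then the measure-preserving G-action 𝐓 = (𝐓_g)_{g∈G} on (X, μ) is of 0-type: for all measurable A, B ⊆ X with μ(A) < ∞ and μ(B) < ∞, μ(𝐓_g A ∩ B) → 0 as g → ∞ along the cocompact filter of G. -/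
open MeasureTheory Filter Topology Set ENNReal

noncomputable section

section ActionDefs

variable {G X : Type*}

/-- A Borel action of a group `G` on a measurable space `X`. -/
def IsBorelAction [Group G] [MeasurableSpace G] [MeasurableSpace X]
    (T : G → X → X) : Prop :=
  Measurable (Function.uncurry T) ∧ (∀ x, T 1 x = x) ∧ ∀ g h x, T (g * h) x = T g (T h x)

/-- A measure-preserving Borel action. -/
def IsMPAction [Group G] [MeasurableSpace G] [MeasurableSpace X]
    (μ : Measure X) (T : G → X → X) : Prop :=
  IsBorelAction T ∧ ∀ g, MeasurePreserving (T g) μ μ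

/-- A nonsingular Borel action: each `μ ∘ T g` is mutually absolutely continuous with `μ`. -/
def IsNonsingularAction [Group G] [MeasurableSpace G] [MeasurableSpace X]
    (μ : Measure X) (T : G → X → X) : Prop :=
  IsBorelAction T ∧ ∀ g, μ.map (T g) ≪ μ ∧ μ ≪ μ.map (T g)

/-- An action is of 0-type if `μ (T g A ∩ B) → 0` as `g → ∞` along the cocompact filter,
for all sets `A`, `B` of finite measure. -/
def IsZeroType [Group G] [MeasurableSpace G] [TopologicalSpace G] [MeasurableSpace X]
    (μ : Measure X) (T : G → X → X) : Prop :=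
  ∀ A B : Set X, MeasurableSet A → MeasurableSet B → μ A ≠ ∞ → μ B ≠ ∞ →
    Tendsto (fun g : G => μ (T g '' A ∩ B)) (cocompact G) (𝓝 0)

/-- A probability-preserving action is mixing if `μ (T g A ∩ B) → μ A * μ B` as `g → ∞`. -/
def IsMixingAction [Group G] [MeasurableSpace G] [TopologicalSpace G] [MeasurableSpace X]
    (μ : Measure X) (T : G → X → X) : Prop :=
  ∀ A B : Set X, MeasurableSet A → MeasurableSet B →
    Tendsto (fun g : G => μ (T g '' A ∩ B)) (cocompact G) (𝓝 (μ A * μ B))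

/-- A free action: a.e. point has trivial stabilizer. -/
def IsFreeAction [Group G] [MeasurableSpace X] (μ : Measure X) (T : G → X → X) : Prop :=
  ∀ᵐ x ∂μ, ∀ g : G, T g x = x → g = 1

/-- A `T`-Følner sequence of sets of finite positive measure. -/
def IsFolner [Group G] [TopologicalSpace G] [MeasurableSpace X]
    (μ : Measure X) (T : G → X → X) (A : ℕ → Set X) : Prop :=
  (∀ n, MeasurableSet (A n) ∧ 0 < μ (A n) ∧ μ (A n) ≠ ∞) ∧
    ∀ K : Set G, IsCompact K →
      Tendsto (fun n => ⨆ g ∈ K, μ (symmDiff (T g '' A n) (A n)) / μ (A n)) atTop (𝓝 0)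

/-- The restriction of the action to an invariant set `A` is totally dissipative:
there is a measurable subset `W ⊆ A` meeting the orbit of a.e. point of `A` exactly once,
and a.e. point of `A` has compact stabilizer. -/
def IsTotallyDissipativeOn [Group G] [TopologicalSpace G] [MeasurableSpace X]
    (μ : Measure X) (T : G → X → X) (A : Set X) : Prop :=
  ∃ W : Set X, MeasurableSet W ∧ W ⊆ A ∧
    ∀ᵐ z ∂(μ.restrict A),
      (∃! w, w ∈ W ∧ ∃ g : G, T g z = w) ∧ IsCompact {g : G | T g z = z}

/-- A totally dissipative action. -/
def IsTotallyDissipative [Group G] [TopologicalSpace G] [MeasurableSpace X]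
    (μ : Measure X) (T : G → X → X) : Prop :=
  IsTotallyDissipativeOn μ T Set.univ

/-- The restriction of the action to the invariant set `A` is conservative: no invariant
subset of `A` of positive measure on which the action is totally dissipative. -/
def IsConservativeOn [Group G] [TopologicalSpace G] [MeasurableSpace X]
    (μ : Measure X) (T : G → X → X) (A : Set X) : Prop :=
  ¬ ∃ B : Set X, B ⊆ A ∧ MeasurableSet B ∧ 0 < μ B ∧ (∀ g : G, T g ⁻¹' B = B) ∧
      IsTotallyDissipativeOn μ T B

/-- A conservative action. -/
def IsConservativeAction [Group G] [TopologicalSpace G] [MeasurableSpace X]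
    (μ : Measure X) (T : G → X → X) : Prop :=
  IsConservativeOn μ T Set.univ

/-- An ergodic action: every a.e. invariant set is null or conull. -/
def IsErgodicAction [Group G] [MeasurableSpace X] (μ : Measure X) (T : G → X → X) : Prop :=
  ∀ A : Set X, MeasurableSet A → (∀ g : G, μ (symmDiff (T g '' A) A) = 0) →
    μ A = 0 ∨ μ Aᶜ = 0

/-- A properly ergodic action: ergodic, and the measure is not concentrated on one orbit. -/
def IsProperlyErgodic [Group G] [MeasurableSpace X] (μ : Measure X) (T : G → X → X) : Prop :=
  IsErgodicAction μ T ∧ ¬ ∃ z : X, μ {y | ∃ g : G, T g z = y}ᶜ = 0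

/-- A weakly mixing action: the product with every ergodic probability-preserving action
on a standard probability space is ergodic. -/
def IsWeaklyMixingAction [Group G] [MeasurableSpace G] [MeasurableSpace X]
    (μ : Measure X) (T : G → X → X) : Prop :=
  ∀ (Z : Type) [MeasurableSpace Z] [StandardBorelSpace Z] (κ : Measure Z)
    [IsProbabilityMeasure κ] (R : G → Z → Z),
    IsMPAction κ R → IsErgodicAction κ R →
      IsErgodicAction (μ.prod κ) (fun g p => (T g p.1, R g p.2))

/-- A sharply weak mixing action: properly ergodic, and the product with every ergodic
conservative nonsingular action on a nonatomic standard probability space is either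
ergodic or totally dissipative. -/
def IsSharplyWeakMixing [Group G] [MeasurableSpace G] [TopologicalSpace G] [MeasurableSpace X]
    (μ : Measure X) (T : G → X → X) : Prop :=
  IsProperlyErgodic μ T ∧
    ∀ (Z : Type) [MeasurableSpace Z] [StandardBorelSpace Z] (κ : Measure Z)
      [IsProbabilityMeasure κ] (R : G → Z → Z),
      (∀ z : Z, κ {z} = 0) →
      IsNonsingularAction κ R → IsErgodicAction κ R → IsConservativeAction κ R →
        (IsErgodicAction (μ.prod κ) (fun g p => (T g p.1, R g p.2)) ∨
          IsTotallyDissipative (μ.prod κ) (fun g p => (T g p.1, R g p.2)))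

end ActionDefs

/-- A witness for the Haagerup property: a weakly continuous unitary representation of `G`
on a separable complex Hilbert space whose matrix coefficients vanish at infinity and which
has almost-invariant unit vectors. -/
structure HaagerupWitness (G : Type*) [Group G] [TopologicalSpace G] where
  (E : Type)
  [nacg : NormedAddCommGroup E]
  [ips : InnerProductSpace ℂ E]
  [cs : CompleteSpace E]
  [sct : SecondCountableTopology E]
  (V : G →* (E ≃ₗᵢ[ℂ] E))
  (weak_cont : ∀ ξ η : E, Continuous fun g : G => (inner ℂ (V g ξ) η : ℂ))
  (c0 : ∀ ξ η : E, Tendsto (fun g : G => (inner ℂ (V g ξ) η : ℂ)) (cocompact G) (𝓝 0))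
  (almost_inv : ∀ ε : ℝ, 0 < ε → ∀ K : Set G, IsCompact K →
    ∃ ξ : E, ‖ξ‖ = 1 ∧ ∀ g ∈ K, ‖V g ξ - ξ‖ < ε)

/-- The Haagerup property for a topological group `G`. -/
def HasHaagerupProperty (G : Type*) [Group G] [TopologicalSpace G] : Prop :=
  Nonempty (HaagerupWitness G)

/-- Property (T) for the pair `H ⊆ G`: every weakly continuous unitary representation of `G`
on a separable complex Hilbert space with almost-invariant unit vectors has a nonzero
`H`-invariant vector. -/
def HasPropertyTPair (G : Type*) [Group G] [TopologicalSpace G] (H : Subgroup G) : Prop :=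
  ∀ (E : Type) [NormedAddCommGroup E] [InnerProductSpace ℂ E] [CompleteSpace E]
    [SecondCountableTopology E] (V : G →* (E ≃ₗᵢ[ℂ] E)),
    (∀ ξ η : E, Continuous fun g : G => (inner ℂ (V g ξ) η : ℂ)) →
    (∀ ε : ℝ, 0 < ε → ∀ K : Set G, IsCompact K →
      ∃ ξ : E, ‖ξ‖ = 1 ∧ ∀ g ∈ K, ‖V g ξ - ξ‖ < ε) →
    ∃ η : E, η ≠ 0 ∧ ∀ h ∈ H, V h η = η

/-- The squared Hellinger distance of two measures `α`, `β` with respect to a reference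
measure `γ`. -/
def hellingerSq {Y : Type*} [MeasurableSpace Y] (γ α β : Measure Y) : ℝ :=
  (1 / 2) * ∫ y, (Real.sqrt (α.rnDeriv γ y).toReal - Real.sqrt (β.rnDeriv γ y).toReal) ^ 2 ∂γ

/-- The tail cylinder `𝐁ⁿ = Yⁿ × B n × B (n+1) × ⋯` (with `0`-based indexing): the set of
sequences whose `j`-th coordinate lies in `B j` for every `j ≥ n`. -/
def tailCylinder {Y : Type*} (B : ℕ → Set Y) (n : ℕ) : Set (ℕ → Y) :=
  {x : ℕ → Y | ∀ j, n ≤ j → x j ∈ B j}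

section ZeroTypeAux

open MeasurableSpace NNReal

namespace RPZT

lemma n_two_half : (2 : ℝ≥0∞) * (1/2) = 1 := by
  have h : ((2 : ℝ≥0) : ℝ≥0∞) * ((1/2 : ℝ≥0) : ℝ≥0∞) = ((1 : ℝ≥0) : ℝ≥0∞) := by
    rw [← ENNReal.coe_mul, ENNReal.coe_inj]
    rw [← NNReal.coe_inj]; push_cast; norm_num
  simpa [ENNReal.coe_div] using h

lemma n_half_sq_lt : (1/2 : ℝ≥0∞) * (1/2) < 3/8 := by
  have h : ((1/2 : ℝ≥0) : ℝ≥0∞) * ((1/2 : ℝ≥0) : ℝ≥0∞) < ((3/8 : ℝ≥0) : ℝ≥0∞) := by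
    rw [← ENNReal.coe_mul, ENNReal.coe_lt_coe, ← NNReal.coe_lt_coe]; push_cast; norm_num
  simpa [ENNReal.coe_div] using h

lemma n_two_mul : (2 : ℝ≥0∞) * (3/8) = 3/4 := by
  have h : ((2 : ℝ≥0) : ℝ≥0∞) * ((3/8 : ℝ≥0) : ℝ≥0∞) = ((3/4 : ℝ≥0) : ℝ≥0∞) := by
    rw [← ENNReal.coe_mul, ENNReal.coe_inj, ← NNReal.coe_inj]; push_cast; norm_num
  simpa [ENNReal.coe_div] using h

lemma n_threequarter_lt_one : (3/4 : ℝ≥0∞) < 1 := by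
  have h : ((3/4 : ℝ≥0) : ℝ≥0∞) < ((1 : ℝ≥0) : ℝ≥0∞) := by
    rw [ENNReal.coe_lt_coe, ← NNReal.coe_lt_coe]; push_cast; norm_num
  simpa [ENNReal.coe_div] using h

variable {Y : Type*} [MeasurableSpace Y]

/-- A cylinder-type set. -/
def cyl (C : ℕ → Set Y) : Set (ℕ → Y) := {x : ℕ → Y | ∀ j, x j ∈ C j}

lemma mem_cyl {C : ℕ → Set Y} {x : ℕ → Y} : x ∈ cyl C ↔ ∀ j, x j ∈ C j := Iff.rfl

lemma measurableSet_cyl {C : ℕ → Set Y} (hC : ∀ j, MeasurableSet (C j)) :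
    MeasurableSet (cyl C) := by
  have h : cyl C = ⋂ j, (fun x : ℕ → Y => x j) ⁻¹' C j := by
    ext x; simp [cyl]
  rw [h]
  exact MeasurableSet.iInter fun j => (measurable_pi_apply j) (hC j)

lemma tail_eq_cyl (B : ℕ → Set Y) (n : ℕ) :
    tailCylinder B n = cyl (fun j => if j < n then Set.univ else B j) := by
  ext x
  simp only [tailCylinder, cyl, Set.mem_setOf_eq]
  constructor
  · intro h j
    split_ifs with hj
    · trivial
    · exact h j (not_lt.1 hj)
  · intro h j hj
    have := h j
    rwa [if_neg (not_lt.2 hj)] at this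

lemma measurableSet_tail {B : ℕ → Set Y} (hB : ∀ j, MeasurableSet (B j)) (n : ℕ) :
    MeasurableSet (tailCylinder B n) := by
  rw [tail_eq_cyl]
  exact measurableSet_cyl fun j => by split_ifs; exacts [MeasurableSet.univ, hB j]

lemma tail_mono {B : ℕ → Set Y} : Monotone (tailCylinder B) :=
  fun _ _ hnm _ hx j hj => hx j (hnm.trans hj)

lemma prod_helper (h : ℕ → ℝ≥0∞) (M j : ℕ) (hMj : M ≤ j)
    (hmid : ∀ i, M ≤ i → i < j → h i = 1) :
    ∏ i ∈ Finset.range (j+1), h i = (∏ i ∈ Finset.range M, h i) * h j := by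
  have h1 : ∏ i ∈ Finset.Ico M j, h i = 1 :=
    Finset.prod_eq_one fun i hi =>
      hmid i (Finset.mem_Ico.1 hi).1 (Finset.mem_Ico.1 hi).2
  rw [← Finset.prod_range_mul_prod_Ico h (Nat.le_succ_of_le hMj),
    Finset.prod_Ico_succ_top hMj, h1, one_mul]

end RPZT

end ZeroTypeAux

/-- **From the proof of Theorem B.** If moreover `T` is mixing, then the product action
`𝐓 = (T g × T g × ⋯)_{g ∈ G}` on the restricted infinite power `(X, γ^𝐁)` is of 0-type. -/
theorem restrictedPower_zeroType {G : Type*} [Group G]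
    [TopologicalSpace G] [IsTopologicalGroup G] [LocallyCompactSpace G]
    [SecondCountableTopology G] [NoncompactSpace G] [MeasurableSpace G] [BorelSpace G]
    {Y : Type*} [MeasurableSpace Y] [StandardBorelSpace Y]
    (γ : Measure Y) [IsProbabilityMeasure γ] (hna : ∀ y : Y, γ {y} = 0)
    (T : G → Y → Y) (hT : IsMPAction γ T) (hmix : IsMixingAction γ T)
    (B : ℕ → Set Y) (hBm : ∀ n, MeasurableSet (B n)) (hB : ∀ n, γ (B n) = 1 / 2)
    (hsum : ∀ K : Set G, IsCompact K →
      (∑' n, ⨆ g ∈ K, γ (symmDiff (T g '' B n) (B n))) ≠ ∞)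
    (μ : Measure (ℕ → Y))
    (hcyl : ∀ (m : ℕ) (C : ℕ → Set Y), (∀ j, MeasurableSet (C j)) →
      (∀ j, m ≤ j → C j = B j) →
      μ {x : ℕ → Y | ∀ j, x j ∈ C j} = ∏ j ∈ Finset.range m, γ (C j) / γ (B j))
    (hsupp : μ ((⋃ n, tailCylinder B n)ᶜ) = 0) :
    IsZeroType μ (fun (g : G) (x : ℕ → Y) (j : ℕ) => T g (x j)) := by
  classical
  obtain ⟨⟨hTmeas, hT1, hTmul⟩, hTpres⟩ := hT
  set U : Set (ℕ → Y) := ⋃ n, tailCylinder B n with hU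
  have hUc : μ Uᶜ = 0 := hsupp
  -- basic facts about T
  have hTm : ∀ g : G, Measurable (T g) := fun g => by
    have : (fun y => T g y) = Function.uncurry T ∘ fun y => (g, y) := rfl
    rw [show T g = fun y => T g y from rfl, this]
    exact hTmeas.comp (measurable_const.prodMk measurable_id)
  have hTcancel : ∀ (g : G) (y : Y), T g⁻¹ (T g y) = y := fun g y => by
    rw [← hTmul, inv_mul_cancel, hT1]
  have himg : ∀ (g : G) (C : Set Y), T g '' C = T g⁻¹ ⁻¹' C := by
    intro g C; ext y
    constructor
    · rintro ⟨x, hx, rfl⟩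
      simpa [hTcancel g x] using hx
    · intro hy
      exact ⟨T g⁻¹ y, hy, by simpa using hTcancel g⁻¹ y⟩
  have hγpre : ∀ (g : G) {C : Set Y}, MeasurableSet C → γ (T g ⁻¹' C) = γ C :=
    fun g C hC => (hTpres g).measure_preimage hC.nullMeasurableSet
  -- the product map
  set F : G → (ℕ → Y) → (ℕ → Y) := fun g x j => T g (x j) with hF
  have hFm : ∀ g, Measurable (F g) :=
    fun g => measurable_pi_lambda _ fun j => (hTm g).comp (measurable_pi_apply j)
  have hFcancel : ∀ (g : G) (x : ℕ → Y), F g⁻¹ (F g x) = x :=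
    fun g x => funext fun j => hTcancel g (x j)
  have hFimg : ∀ (g : G) (S : Set (ℕ → Y)), F g '' S = F g⁻¹ ⁻¹' S := by
    intro g S; ext y
    constructor
    · rintro ⟨x, hx, rfl⟩
      simpa [hFcancel g x] using hx
    · intro hy
      refine ⟨F g⁻¹ y, hy, ?_⟩
      have := hFcancel g⁻¹ y
      simpa using this
  -- measurability of tails
  have htailm : ∀ n, MeasurableSet (tailCylinder B n) := RPZT.measurableSet_tail hBm
  have hUm : MeasurableSet U := MeasurableSet.iUnion htailm
  -- cylinder measures
  have hcyl' : ∀ (m : ℕ) (C : ℕ → Set Y), (∀ j, MeasurableSet (C j)) →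
      (∀ j, m ≤ j → C j = B j) →
      μ (RPZT.cyl C) = ∏ j ∈ Finset.range m, 2 * γ (C j) := by
    intro m C h1 h2
    rw [show RPZT.cyl C = {x : ℕ → Y | ∀ j, x j ∈ C j} from rfl, hcyl m C h1 h2]
    exact Finset.prod_congr rfl fun j _ => by
      rw [hB j, one_div, div_eq_mul_inv, inv_inv, mul_comm]
  have htail : ∀ n, μ (tailCylinder B n) = 2 ^ n := by
    intro n
    rw [RPZT.tail_eq_cyl,
      hcyl' n _ (fun j => by split_ifs; exacts [MeasurableSet.univ, hBm j])
        (fun j hj => if_neg (not_lt.2 hj))]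
    calc ∏ j ∈ Finset.range n, 2 * γ (if j < n then Set.univ else B j)
        = ∏ _j ∈ Finset.range n, (2 : ℝ≥0∞) := Finset.prod_congr rfl fun j hj => by
          rw [if_pos (Finset.mem_range.1 hj), measure_univ, mul_one]
      _ = 2 ^ n := by rw [Finset.prod_const, Finset.card_range]
  have htailfin : ∀ n, μ (tailCylinder B n) ≠ ∞ := fun n => by
    rw [htail n]; exact ENNReal.pow_ne_top ENNReal.ofNat_ne_top
  -- summability of the defects
  have hdsum : ∀ g : G, ∑' n, γ (B n \ T g ⁻¹' B n) ≠ ∞ := by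
    intro g
    have h1 : (∑' n, γ (symmDiff (T g⁻¹ '' B n) (B n))) ≠ ∞ := by
      have h2 := hsum {g⁻¹} isCompact_singleton
      simpa using h2
    refine ne_top_of_le_ne_top h1 (ENNReal.tsum_le_tsum fun n => measure_mono ?_)
    rw [himg g⁻¹ (B n), inv_inv]
    exact fun y hy => Set.mem_symmDiff.2 (Or.inr ⟨hy.1, hy.2⟩)
  -- Step B : the preimage of a cylinder has the same measure
  have stepB : ∀ (g : G) (m : ℕ) (C : ℕ → Set Y), (∀ j, MeasurableSet (C j)) →
      (∀ j, m ≤ j → C j = B j) →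
      μ (F g ⁻¹' RPZT.cyl C) = ∏ j ∈ Finset.range m, 2 * γ (C j) := by
    intro g m C hCm hCB
    set P : ℝ≥0∞ := ∏ j ∈ Finset.range m, 2 * γ (C j) with hP
    have hPfin : P ≠ ∞ := by
      rw [hP]
      exact (ENNReal.prod_lt_top fun j _ =>
        (ENNReal.mul_ne_top ENNReal.ofNat_ne_top (measure_ne_top γ _)).lt_top).ne
    set Fc : ℕ → Set Y := fun j => T g ⁻¹' C j with hFc
    have hFcm : ∀ j, MeasurableSet (Fc j) := fun j => hTm g (hCm j)
    have hpre : F g ⁻¹' RPZT.cyl C = RPZT.cyl Fc := rfl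
    have hprodF : ∀ M, m ≤ M → ∏ j ∈ Finset.range M, 2 * γ (Fc j) = P := by
      intro M hM
      rw [← Finset.prod_range_mul_prod_Ico _ hM]
      have h1 : ∏ j ∈ Finset.Ico m M, 2 * γ (Fc j) = 1 :=
        Finset.prod_eq_one fun j hj => by
          rw [hFc]; dsimp only
          rw [hCB j (Finset.mem_Ico.1 hj).1, hγpre g (hBm j), hB j, RPZT.n_two_half]
      have h2 : ∏ j ∈ Finset.range m, 2 * γ (Fc j) = P := by
        rw [hP]
        exact Finset.prod_congr rfl fun j _ => by
          rw [hFc]; dsimp only; rw [hγpre g (hCm j)]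
      rw [h1, h2, mul_one]
    have key : ∀ M, m ≤ M → μ (RPZT.cyl Fc ∩ tailCylinder B M) ≤ P ∧
        P ≤ μ (RPZT.cyl Fc ∩ tailCylinder B M) +
          P * 2 * ∑' k, γ (B (k+M) \ T g ⁻¹' B (k+M)) := by
      intro M hM
      set Q : Set (ℕ → Y) := RPZT.cyl (fun i => if i < M then Fc i else B i) with hQ
      have hQmeas : ∀ i, MeasurableSet (if i < M then Fc i else B i) := fun i => by
        split_ifs; exacts [hFcm i, hBm i]
      have hQμ : μ Q = P := by
        rw [hQ, hcyl' M _ hQmeas (fun j hj => if_neg (not_lt.2 hj)), ← hprodF M hM]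
        exact Finset.prod_congr rfl fun j hj => by rw [if_pos (Finset.mem_range.1 hj)]
      have hsub1 : RPZT.cyl Fc ∩ tailCylinder B M ⊆ Q := by
        rintro x ⟨h1, h2⟩ i
        dsimp only
        split_ifs with hi
        · exact h1 i
        · exact h2 i (not_lt.1 hi)
      set bad : ℕ → Set (ℕ → Y) := fun k =>
        RPZT.cyl (fun i => if i < M then Fc i else if i = k + M then B i \ Fc i else B i)
        with hbaddef
      have hsub2 : Q ⊆ (RPZT.cyl Fc ∩ tailCylinder B M) ∪ ⋃ k, bad k := by
        intro x hx
        by_cases hall : ∀ i, x i ∈ Fc i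
        · refine Or.inl ⟨hall, fun i hi => ?_⟩
          have := hx i
          dsimp only at this
          rwa [if_neg (not_lt.2 hi)] at this
        · right
          push_neg at hall
          obtain ⟨j, hj⟩ := hall
          have hjM : M ≤ j := by
            by_contra h
            exact hj (by have := hx j; dsimp only at this; rwa [if_pos (lt_of_not_ge h)] at this)
          have hkM : j - M + M = j := Nat.sub_add_cancel hjM
          refine Set.mem_iUnion.2 ⟨j - M, fun i => ?_⟩
          dsimp only
          by_cases h1 : i < M
          · rw [if_pos h1]
            have := hx i; dsimp only at this; rwa [if_pos h1] at this
          · rw [if_neg h1]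
            have hxi : x i ∈ B i := by have := hx i; dsimp only at this; rwa [if_neg h1] at this
            by_cases h2 : i = j - M + M
            · rw [if_pos h2]
              have hij : i = j := by rw [h2, hkM]
              subst hij
              exact ⟨hxi, hj⟩
            · rw [if_neg h2]; exact hxi
      have hbad : ∀ k : ℕ, μ (bad k) = P * (2 * γ (B (k+M) \ T g ⁻¹' B (k+M))) := by
        intro k
        have hDm : ∀ i, MeasurableSet
            (if i < M then Fc i else if i = k + M then B i \ Fc i else B i) := fun i => by
          split_ifs; exacts [hFcm i, (hBm i).diff (hFcm i), hBm i]
        have hDB : ∀ i, k + M + 1 ≤ i →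
            (if i < M then Fc i else if i = k + M then B i \ Fc i else B i) = B i := by
          intro i hi
          rw [if_neg (by omega), if_neg (by omega)]
        rw [hbaddef]; dsimp only
        rw [hcyl' (k+M+1) _ hDm hDB,
          RPZT.prod_helper _ M (k+M) (Nat.le_add_left M k)
            (fun i hi1 hi2 => by
              rw [if_neg (by omega), if_neg (by omega), hB i, RPZT.n_two_half])]
        have hlast : (if k + M < M then Fc (k+M)
            else if k + M = k + M then B (k+M) \ Fc (k+M) else B (k+M))
            = B (k+M) \ Fc (k+M) := by
          rw [if_neg (by omega), if_pos rfl]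
        rw [hlast]
        have hfirst : ∏ i ∈ Finset.range M,
            2 * γ (if i < M then Fc i else if i = k + M then B i \ Fc i else B i) = P := by
          rw [← hprodF M hM]
          exact Finset.prod_congr rfl fun i hi => by
            rw [if_pos (Finset.mem_range.1 hi)]
        rw [hfirst, show Fc (k+M) = T g ⁻¹' B (k+M) from by
          rw [show Fc (k+M) = T g ⁻¹' C (k+M) from rfl,
            hCB (k+M) (hM.trans (Nat.le_add_left M k))]]
      have h1 : μ (RPZT.cyl Fc ∩ tailCylinder B M) ≤ P :=
        (measure_mono hsub1).trans (le_of_eq hQμ)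
      refine ⟨h1, ?_⟩
      calc P = μ Q := hQμ.symm
        _ ≤ μ ((RPZT.cyl Fc ∩ tailCylinder B M) ∪ ⋃ k, bad k) := measure_mono hsub2
        _ ≤ μ (RPZT.cyl Fc ∩ tailCylinder B M) + μ (⋃ k, bad k) := measure_union_le _ _
        _ ≤ μ (RPZT.cyl Fc ∩ tailCylinder B M) + ∑' k, μ (bad k) := by
            exact add_le_add_right (measure_iUnion_le _) _
        _ = μ (RPZT.cyl Fc ∩ tailCylinder B M) +
              P * 2 * ∑' k, γ (B (k+M) \ T g ⁻¹' B (k+M)) := by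
            congr 1
            rw [tsum_congr hbad]
            simp_rw [← mul_assoc]
            rw [ENNReal.tsum_mul_left]
    have hmono : Monotone fun M => RPZT.cyl Fc ∩ tailCylinder B M :=
      fun a b hab => Set.inter_subset_inter_right _ (RPZT.tail_mono hab)
    have hcylU : μ (RPZT.cyl Fc) = ⨆ M, μ (RPZT.cyl Fc ∩ tailCylinder B M) := by
      conv_lhs => rw [← measure_inter_conull hUc]
      rw [hU, Set.inter_iUnion, hmono.measure_iUnion]
    have hle : μ (RPZT.cyl Fc) ≤ P := by
      rw [hcylU]
      refine iSup_le fun M => ?_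
      calc μ (RPZT.cyl Fc ∩ tailCylinder B M)
          ≤ μ (RPZT.cyl Fc ∩ tailCylinder B (max M m)) :=
            measure_mono (hmono (le_max_left M m))
        _ ≤ P := (key _ (le_max_right M m)).1
    have hge : P ≤ μ (RPZT.cyl Fc) := by
      have htendsto : Tendsto (fun M => μ (RPZT.cyl Fc) +
          P * 2 * ∑' k, γ (B (k+M) \ T g ⁻¹' B (k+M))) atTop
          (𝓝 (μ (RPZT.cyl Fc) + P * 2 * 0)) := by
        refine tendsto_const_nhds.add (ENNReal.Tendsto.const_mul ?_
          (Or.inr (ENNReal.mul_ne_top hPfin ENNReal.ofNat_ne_top)))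
        exact ENNReal.tendsto_sum_nat_add _ (hdsum g)
      rw [mul_zero, add_zero] at htendsto
      refine ge_of_tendsto htendsto ?_
      filter_upwards [eventually_ge_atTop m] with M hM
      calc P ≤ μ (RPZT.cyl Fc ∩ tailCylinder B M) +
            P * 2 * ∑' k, γ (B (k+M) \ T g ⁻¹' B (k+M)) := (key M hM).2
        _ ≤ μ (RPZT.cyl Fc) + P * 2 * ∑' k, γ (B (k+M) \ T g ⁻¹' B (k+M)) :=
            add_le_add_left (measure_mono Set.inter_subset_left) _
    rw [hpre]
    exact le_antisymm hle hge
  -- Step A : preimage of the complement of U is null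
  have stepA : ∀ g : G, μ (F g ⁻¹' Uᶜ) = 0 := by
    intro g
    have htailnull : ∀ N : ℕ, μ (F g ⁻¹' Uᶜ ∩ tailCylinder B N) = 0 := by
      intro N
      set s : ℕ → Set (ℕ → Y) := fun k => tailCylinder B N ∩
        (fun x : ℕ → Y => x (k + N)) ⁻¹' (B (k+N) \ T g ⁻¹' B (k+N)) with hs
      have hsub : F g ⁻¹' Uᶜ ∩ tailCylinder B N ⊆ Filter.limsup s atTop := by
        rintro x ⟨hx1, hx2⟩
        rw [Filter.mem_limsup_iff_frequently_mem, Filter.frequently_atTop]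
        intro a
        have hnot : ∀ n : ℕ, ∃ j, n ≤ j ∧ T g (x j) ∉ B j := by
          intro n
          by_contra h
          push_neg at h
          exact hx1 (Set.mem_iUnion.2 ⟨n, fun j hj => h j hj⟩)
        obtain ⟨j, hj1, hj2⟩ := hnot (a + N)
        refine ⟨j - N, by omega, ?_⟩
        have hjN : j - N + N = j := by omega
        rw [hs]; dsimp only
        rw [hjN]
        exact ⟨hx2, hx2 j (by omega), fun hc => hj2 hc⟩
      have hmeas_bound : ∀ k, μ (s k) ≤ 2^N * (2 * γ (B (k+N) \ T g ⁻¹' B (k+N))) := by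
        intro k
        have hDm : ∀ i, MeasurableSet (if i < N then Set.univ
            else if i = k + N then B i \ T g ⁻¹' B i else B i) := fun i => by
          split_ifs
          exacts [MeasurableSet.univ, (hBm i).diff (hTm g (hBm i)), hBm i]
        have hDB : ∀ i, k + N + 1 ≤ i → (if i < N then Set.univ
            else if i = k + N then B i \ T g ⁻¹' B i else B i) = B i := by
          intro i hi
          rw [if_neg (by omega), if_neg (by omega)]
        have hsubcyl : s k ⊆ RPZT.cyl (fun i => if i < N then Set.univ
            else if i = k + N then B i \ T g ⁻¹' B i else B i) := by
          rintro x ⟨h1, h2⟩ i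
          dsimp only
          by_cases hiN : i < N
          · rw [if_pos hiN]; trivial
          · rw [if_neg hiN]
            by_cases h2' : i = k + N
            · rw [if_pos h2', h2']
              exact h2
            · rw [if_neg h2']
              exact h1 i (not_lt.1 hiN)
        refine (measure_mono hsubcyl).trans (le_of_eq ?_)
        rw [hcyl' (k+N+1) _ hDm hDB,
          RPZT.prod_helper _ N (k+N) (Nat.le_add_left N k)
            (fun i hi1 hi2 => by
              rw [if_neg (by omega), if_neg (by omega), hB i, RPZT.n_two_half])]
        congr 1
        · calc ∏ i ∈ Finset.range N, 2 * γ (if i < N then Set.univ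
              else if i = k + N then B i \ T g ⁻¹' B i else B i)
              = ∏ _i ∈ Finset.range N, (2:ℝ≥0∞) := Finset.prod_congr rfl fun i hi => by
                rw [if_pos (Finset.mem_range.1 hi), measure_univ, mul_one]
            _ = 2 ^ N := by rw [Finset.prod_const, Finset.card_range]
        · rw [if_neg (by omega), if_pos rfl]
      have hfin : ∑' k, μ (s k) ≠ ∞ := by
        refine ne_top_of_le_ne_top ?_ (ENNReal.tsum_le_tsum hmeas_bound)
        simp_rw [← mul_assoc]
        rw [ENNReal.tsum_mul_left]
        refine ENNReal.mul_ne_top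
          (ENNReal.mul_ne_top (ENNReal.pow_ne_top ENNReal.ofNat_ne_top) ENNReal.ofNat_ne_top) ?_
        refine ne_top_of_le_ne_top (hdsum g) ?_
        exact ENNReal.tsum_comp_le_tsum_of_injective (add_left_injective N) _
      exact measure_mono_null hsub (measure_limsup_atTop_eq_zero hfin)
    calc μ (F g ⁻¹' Uᶜ) = μ (F g ⁻¹' Uᶜ ∩ U) := (measure_inter_conull hUc).symm
      _ = μ (⋃ N, (F g ⁻¹' Uᶜ ∩ tailCylinder B N)) := by rw [hU, Set.inter_iUnion]
      _ = 0 := measure_iUnion_null htailnull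
  -- Step C : the map is measure preserving
  have hmapeq : ∀ g : G, μ.map (F g) = μ := by
    intro g
    set PP : Set (Set (ℕ → Y)) :=
      {S | ∃ m : ℕ, ∃ C : ℕ → Set Y, (∀ j, MeasurableSet (C j)) ∧
        (∀ j, m ≤ j → C j = B j) ∧ S = RPZT.cyl C} ∪
      {S | ∃ S', MeasurableSet S' ∧ S = S' ∩ Uᶜ} with hPPdef
    have hcylsubU : ∀ (m : ℕ) (C : ℕ → Set Y), (∀ j, m ≤ j → C j = B j) →
        RPZT.cyl C ⊆ U := by
      intro m C hCB x hx
      refine Set.mem_iUnion.2 ⟨m, fun j hj => ?_⟩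
      have := hx j
      rwa [hCB j hj] at this
    have hPPmeas : ∀ S ∈ PP, MeasurableSet S := by
      rintro S (⟨m, C, hCm, hCB, rfl⟩ | ⟨S', hS', rfl⟩)
      · exact RPZT.measurableSet_cyl hCm
      · exact hS'.inter hUm.compl
    have hgen : (inferInstance : MeasurableSpace (ℕ → Y)) = MeasurableSpace.generateFrom PP := by
      refine le_antisymm ?_ (MeasurableSpace.generateFrom_le hPPmeas)
      have hpile : (MeasurableSpace.pi :
          MeasurableSpace (ℕ → Y)) ≤ MeasurableSpace.generateFrom PP := by
        refine iSup_le fun i => ?_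
        rintro t ⟨s, hs, rfl⟩
        have hdec : (fun x : ℕ → Y => x i) ⁻¹' s =
            (((fun x : ℕ → Y => x i) ⁻¹' s) ∩ Uᶜ) ∪
            ⋃ n, (((fun x : ℕ → Y => x i) ⁻¹' s) ∩ tailCylinder B n) := by
          rw [← Set.inter_iUnion, ← hU]
          ext x
          by_cases hx : x ∈ U <;> simp [hx]
        rw [hdec]
        refine MeasurableSet.union ?_ (MeasurableSet.iUnion fun n => ?_)
        · exact MeasurableSpace.measurableSet_generateFrom
            (Or.inr ⟨_, (measurable_pi_apply i) hs, rfl⟩)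
        · refine MeasurableSpace.measurableSet_generateFrom (Or.inl ⟨max n (i+1),
            fun j => (if j = i then s else Set.univ) ∩ (if n ≤ j then B j else Set.univ),
            ?_, ?_, ?_⟩)
          · intro j
            refine MeasurableSet.inter ?_ ?_ <;> split_ifs
            exacts [hs, MeasurableSet.univ, hBm j, MeasurableSet.univ]
          · intro j hj
            dsimp only
            rw [if_neg (by omega), if_pos (by omega), Set.univ_inter]
          · ext x
            simp only [RPZT.cyl, Set.mem_inter_iff, Set.mem_preimage, Set.mem_setOf_eq]
            constructor
            · rintro ⟨h1, h2⟩ j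
              refine Set.mem_inter ?_ ?_
              · split_ifs with hji
                · rw [hji]; exact h1
                · trivial
              · split_ifs with hnj
                · exact h2 j hnj
                · trivial
            · intro h
              constructor
              · have := (h i).1
                rwa [if_pos rfl] at this
              · intro j hj
                have := (h j).2
                rwa [if_pos hj] at this
      exact hpile
    have hPi : IsPiSystem PP := by
      rintro S1 (⟨m1, C1, hC1m, hC1B, rfl⟩ | ⟨S1', hS1', rfl⟩)
        S2 (⟨m2, C2, hC2m, hC2B, rfl⟩ | ⟨S2', hS2', rfl⟩) hne
      · refine Or.inl ⟨max m1 m2, fun j => C1 j ∩ C2 j,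
          fun j => (hC1m j).inter (hC2m j), ?_, ?_⟩
        · intro j hj
          dsimp only
          rw [hC1B j (le_trans (le_max_left _ _) hj),
            hC2B j (le_trans (le_max_right _ _) hj), Set.inter_self]
        · ext x
          simp only [RPZT.cyl, Set.mem_inter_iff, Set.mem_setOf_eq]
          exact ⟨fun ⟨h1, h2⟩ j => ⟨h1 j, h2 j⟩, fun h => ⟨fun j => (h j).1, fun j => (h j).2⟩⟩
      · exfalso
        obtain ⟨x, hx1, _, hx2⟩ := hne
        exact hx2 (hcylsubU m1 C1 hC1B hx1)
      · exfalso
        obtain ⟨x, ⟨_, hx2⟩, hx1⟩ := hne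
        exact hx2 (hcylsubU m2 C2 hC2B hx1)
      · refine Or.inr ⟨S1' ∩ S2', hS1'.inter hS2', ?_⟩
        ext x
        simp only [Set.mem_inter_iff, Set.mem_compl_iff]
        tauto
    set V : ℕ → Set (ℕ → Y) := fun n => Nat.casesOn n Uᶜ (tailCylinder B) with hV
    refine Measure.ext_of_generateFrom_of_iUnion PP V hgen hPi ?_ ?_ ?_ ?_
    · ext x
      simp only [Set.mem_iUnion, Set.mem_univ, iff_true]
      by_cases hx : x ∈ U
      · obtain ⟨n, hn⟩ := Set.mem_iUnion.1 hx
        exact ⟨n + 1, hn⟩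
      · exact ⟨0, hx⟩
    · intro i
      cases i with
      | zero => exact Or.inr ⟨Set.univ, MeasurableSet.univ, (Set.univ_inter Uᶜ).symm⟩
      | succ n =>
        refine Or.inl ⟨n, fun j => if j < n then Set.univ else B j,
          fun j => by dsimp only; split_ifs; exacts [MeasurableSet.univ, hBm j],
          fun j hj => if_neg (not_lt.2 hj), ?_⟩
        exact RPZT.tail_eq_cyl B n
    · intro i
      cases i with
      | zero =>
        show μ.map (F g) Uᶜ ≠ ∞
        rw [Measure.map_apply (hFm g) hUm.compl]
        rw [stepA g]
        exact ENNReal.zero_ne_top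
      | succ n =>
        show μ.map (F g) (tailCylinder B n) ≠ ∞
        rw [Measure.map_apply (hFm g) (htailm n), RPZT.tail_eq_cyl]
        rw [stepB g n _ (fun j => by split_ifs; exacts [MeasurableSet.univ, hBm j])
          (fun j hj => if_neg (not_lt.2 hj))]
        exact (ENNReal.prod_lt_top fun j _ =>
          (ENNReal.mul_ne_top ENNReal.ofNat_ne_top (measure_ne_top γ _)).lt_top).ne
    · rintro S (⟨m, C, hCm, hCB, rfl⟩ | ⟨S', hS', rfl⟩)
      · rw [Measure.map_apply (hFm g) (RPZT.measurableSet_cyl hCm),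
          stepB g m C hCm hCB, hcyl' m C hCm hCB]
      · rw [Measure.map_apply (hFm g) (hS'.inter hUm.compl)]
        have h1 : μ (F g ⁻¹' (S' ∩ Uᶜ)) = 0 :=
          measure_mono_null (Set.preimage_mono Set.inter_subset_right) (stepA g)
        have h2 : μ (S' ∩ Uᶜ) = 0 := measure_mono_null Set.inter_subset_right hUc
        rw [h1, h2]
  -- measure of images
  have himgmeas : ∀ (g : G) (S : Set (ℕ → Y)), MeasurableSet S → μ (F g '' S) = μ S := by
    intro g S hS
    rw [hFimg g S, ← Measure.map_apply (hFm g⁻¹) hS, hmapeq g⁻¹]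
  -- Main argument
  intro A Bs hA hBs hAfin hBsfin
  have hgoal : Tendsto (fun g : G => μ (F g '' A ∩ Bs)) (cocompact G) (𝓝 0) := by
    rw [ENNReal.tendsto_nhds_zero]
    intro ε hε
    set ε' : ℝ≥0∞ := min ε 1 with hε'def
    have hε'pos : 0 < ε' := lt_min hε zero_lt_one
    have hthird : 0 < ε' / 3 := ENNReal.div_pos hε'pos.ne' (by simp)
    -- choose n
    have htendA : Tendsto (fun n => μ (A \ tailCylinder B n)) atTop (𝓝 0) := by
      have h1 : Tendsto (μ ∘ fun n => A \ tailCylinder B n) atTop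
          (𝓝 (μ (⋂ n, A \ tailCylinder B n))) := by
        refine tendsto_measure_iInter_atTop
          (fun n => (hA.diff (htailm n)).nullMeasurableSet)
          (fun a b hab => Set.diff_subset_diff_right (RPZT.tail_mono hab))
          ⟨0, ?_⟩
        exact ne_top_of_le_ne_top hAfin (measure_mono Set.diff_subset)
      have h2 : μ (⋂ n, A \ tailCylinder B n) = 0 := by
        rw [← Set.diff_iUnion, ← hU]
        exact measure_mono_null (fun x hx => hx.2) hUc
      rw [h2] at h1
      exact h1
    have htendB : Tendsto (fun n => μ (Bs \ tailCylinder B n)) atTop (𝓝 0) := by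
      have h1 : Tendsto (μ ∘ fun n => Bs \ tailCylinder B n) atTop
          (𝓝 (μ (⋂ n, Bs \ tailCylinder B n))) := by
        refine tendsto_measure_iInter_atTop
          (fun n => (hBs.diff (htailm n)).nullMeasurableSet)
          (fun a b hab => Set.diff_subset_diff_right (RPZT.tail_mono hab))
          ⟨0, ?_⟩
        exact ne_top_of_le_ne_top hBsfin (measure_mono Set.diff_subset)
      have h2 : μ (⋂ n, Bs \ tailCylinder B n) = 0 := by
        rw [← Set.diff_iUnion, ← hU]
        exact measure_mono_null (fun x hx => hx.2) hUc
      rw [h2] at h1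
      exact h1
    obtain ⟨n, hnA, hnB⟩ :=
      ((htendA.eventually_le_const hthird).and (htendB.eventually_le_const hthird)).exists
    -- choose k
    have hpow : Tendsto (fun k : ℕ => (2:ℝ≥0∞)^n * (3/4)^k) atTop (𝓝 0) := by
      have h1 := ENNReal.tendsto_pow_atTop_nhds_zero_of_lt_one RPZT.n_threequarter_lt_one
      have h2 : Tendsto (fun k : ℕ => (2:ℝ≥0∞)^n * (3/4)^k) atTop (𝓝 ((2:ℝ≥0∞)^n * 0)) :=
        ENNReal.Tendsto.const_mul h1 (Or.inr (ENNReal.pow_ne_top ENNReal.ofNat_ne_top))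
      simpa using h2
    obtain ⟨k, hk⟩ := (hpow.eventually_le_const hthird).exists
    -- eventual mixing bound
    have hfac : ∀ᶠ g : G in cocompact G,
        ∀ j ∈ Finset.Ico n (n+k), 2 * γ (T g '' B j ∩ B j) ≤ 3/4 := by
      rw [Filter.eventually_all_finset]
      intro j _
      have h1 := hmix (B j) (B j) (hBm j) (hBm j)
      rw [hB j] at h1
      have h2 := h1.eventually_lt_const RPZT.n_half_sq_lt
      filter_upwards [h2] with g hg
      calc 2 * γ (T g '' B j ∩ B j) ≤ 2 * (3/8) := by
            exact mul_le_mul_right hg.le 2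
        _ = 3/4 := RPZT.n_two_mul
    filter_upwards [hfac] with g hg
    -- the main estimate
    have hTgBm : ∀ i, MeasurableSet (T g '' B i) := fun i => by
      rw [himg g (B i)]
      exact hTm g⁻¹ (hBm i)
    have hmain : μ (F g '' tailCylinder B n ∩ tailCylinder B n) ≤ 2^n * (3/4)^k := by
      have hDm : ∀ i, MeasurableSet (if i < n then Set.univ
          else if i < n + k then T g '' B i ∩ B i else B i) := fun i => by
        split_ifs
        exacts [MeasurableSet.univ, (hTgBm i).inter (hBm i), hBm i]
      have hDB : ∀ i, n + k ≤ i → (if i < n then Set.univ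
          else if i < n + k then T g '' B i ∩ B i else B i) = B i := by
        intro i hi
        rw [if_neg (by omega), if_neg (by omega)]
      have hsub : F g '' tailCylinder B n ∩ tailCylinder B n ⊆
          RPZT.cyl (fun i => if i < n then Set.univ
            else if i < n + k then T g '' B i ∩ B i else B i) := by
        rintro x ⟨⟨y, hy, rfl⟩, hx2⟩ i
        dsimp only
        by_cases h1 : i < n
        · rw [if_pos h1]; trivial
        · rw [if_neg h1]
          have hBi : F g y i ∈ B i := hx2 i (not_lt.1 h1)
          by_cases h2 : i < n + k
          · rw [if_pos h2]
            exact ⟨⟨y i, hy i (not_lt.1 h1), rfl⟩, hBi⟩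
          · rw [if_neg h2]; exact hBi
      refine (measure_mono hsub).trans ?_
      rw [hcyl' (n+k) _ hDm hDB, ← Finset.prod_range_mul_prod_Ico _ (Nat.le_add_right n k)]
      refine mul_le_mul' (le_of_eq ?_) ?_
      · calc ∏ i ∈ Finset.range n, 2 * γ (if i < n then Set.univ
            else if i < n + k then T g '' B i ∩ B i else B i)
            = ∏ _i ∈ Finset.range n, (2:ℝ≥0∞) := Finset.prod_congr rfl fun i hi => by
              rw [if_pos (Finset.mem_range.1 hi), measure_univ, mul_one]
          _ = 2 ^ n := by rw [Finset.prod_const, Finset.card_range]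
      · calc ∏ i ∈ Finset.Ico n (n+k), 2 * γ (if i < n then Set.univ
            else if i < n + k then T g '' B i ∩ B i else B i)
            = ∏ i ∈ Finset.Ico n (n+k), 2 * γ (T g '' B i ∩ B i) :=
              Finset.prod_congr rfl fun i hi => by
                rw [if_neg (not_lt.2 (Finset.mem_Ico.1 hi).1), if_pos (Finset.mem_Ico.1 hi).2]
          _ ≤ (3/4) ^ (Finset.Ico n (n+k)).card :=
              Finset.prod_le_pow_card _ _ _ fun i hi => hg i hi
          _ = (3/4) ^ k := by rw [Nat.card_Ico]; congr 1; omega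
    have hsplit : F g '' A ∩ Bs ⊆ (F g '' tailCylinder B n ∩ tailCylinder B n) ∪
        F g '' (A \ tailCylinder B n) ∪ (Bs \ tailCylinder B n) := by
      rintro x ⟨⟨a, ha, rfl⟩, hxB⟩
      by_cases h1 : a ∈ tailCylinder B n
      · by_cases h2 : F g a ∈ tailCylinder B n
        · exact Or.inl (Or.inl ⟨⟨a, h1, rfl⟩, h2⟩)
        · exact Or.inr ⟨hxB, h2⟩
      · exact Or.inl (Or.inr ⟨a, ⟨ha, h1⟩, rfl⟩)
    calc μ (F g '' A ∩ Bs)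
        ≤ μ (F g '' tailCylinder B n ∩ tailCylinder B n) +
          μ (F g '' (A \ tailCylinder B n)) + μ (Bs \ tailCylinder B n) := by
          refine (measure_mono hsplit).trans ?_
          exact (measure_union_le _ _).trans
            (add_le_add_left (measure_union_le _ _) _)
      _ ≤ ε' / 3 + ε' / 3 + ε' / 3 := by
          refine add_le_add (add_le_add (hmain.trans hk) ?_) hnB
          rw [himgmeas g _ (hA.diff (htailm n))]
          exact hnA
      _ = ε' := ENNReal.add_thirds ε'
      _ ≤ ε := min_le_left _ _
  exact hgoal
end
end

section
/- Let (Y, γ) be a standard nonatomic probability space and 𝐁 = (B_n)_{n≥1} measurable subsets with γ(B_n) = 1/2 for all n. Let (ε_n)_{n≥1} be reals with 0 < ε_n < 1 and ∑_{n=1}^∞ ε_n < ∞, and for each n let μ_n be the probability measure on Y with density dμ_n/dγ = 2ε_n·1_{Y∖B_n} + 2(1−ε_n)·1_{B_n}. Then the restricted infinite power γ^𝐁 and the infinite product probability measure ⊗_{n=1}^∞ μ_n on Y^ℕ are equivalent (each is absolutely continuous with respect to the other). -/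
open MeasureTheory Filter Topology Set ENNReal

noncomputable section

namespace RPEIP

open Finset in
/-- `exp (-(2x)) ≤ 1 - x` for `0 ≤ x ≤ 1/2`. -/
lemma exp_neg_two_mul_le {x : ℝ} (hx : 0 ≤ x) (hx2 : x ≤ 1/2) :
    Real.exp (-(2*x)) ≤ 1 - x := by
  have h1 : (0:ℝ) < 1 - x := by linarith
  have h2 : Real.log (1-x)⁻¹ ≤ (1-x)⁻¹ - 1 :=
    Real.log_le_sub_one_of_pos (by positivity)
  rw [Real.log_inv] at h2
  have h3 : (1-x)⁻¹ - 1 ≤ 2*x := by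
    rw [sub_le_iff_le_add, inv_le_iff_one_le_mul₀ h1]
    nlinarith
  have h4 : -(2*x) ≤ Real.log (1-x) := by linarith
  calc Real.exp (-(2*x)) ≤ Real.exp (Real.log (1-x)) := Real.exp_le_exp.2 h4
    _ = 1 - x := Real.exp_log h1

variable {Y : Type*} [MeasurableSpace Y]

def cylSet (D : ℕ → Set Y) : Set (ℕ → Y) := {x | ∀ j, x j ∈ D j}

lemma measurableSet_cylSet {D : ℕ → Set Y} (h : ∀ j, MeasurableSet (D j)) :
    MeasurableSet (cylSet D) := by
  have : cylSet D = ⋂ j, (fun x : ℕ → Y => x j) ⁻¹' D j := by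
    ext x; simp [cylSet]
  rw [this]
  exact MeasurableSet.iInter fun j => measurable_pi_apply j (h j)

omit [MeasurableSpace Y] in
lemma cylSet_inter (D D' : ℕ → Set Y) :
    cylSet D ∩ cylSet D' = cylSet (fun j => D j ∩ D' j) := by
  ext x; simp [cylSet, forall_and]

def cylPi (Y : Type*) [MeasurableSpace Y] : Set (Set (ℕ → Y)) :=
  {S | ∃ D : ℕ → Set Y, (∀ j, MeasurableSet (D j)) ∧ (∃ m, ∀ j, m ≤ j → D j = Set.univ)
    ∧ S = cylSet D}

lemma isPiSystem_cylPi : IsPiSystem (cylPi Y) := by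
  rintro S ⟨D, hDm, ⟨m, hm⟩, rfl⟩ S' ⟨D', hD'm, ⟨m', hm'⟩, rfl⟩ -
  refine ⟨fun j => D j ∩ D' j, fun j => (hDm j).inter (hD'm j), ⟨max m m', fun j hj => ?_⟩,
    cylSet_inter D D'⟩
  simp only []
  rw [hm j (le_trans (le_max_left _ _) hj), hm' j (le_trans (le_max_right _ _) hj),
    Set.univ_inter]

lemma generateFrom_cylPi :
    (MeasurableSpace.pi : MeasurableSpace (ℕ → Y)) = .generateFrom (cylPi Y) := by
  refine le_antisymm ?_ (MeasurableSpace.generateFrom_le ?_)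
  · rw [MeasurableSpace.pi]
    refine iSup_le fun j => ?_
    rw [MeasurableSpace.le_def]
    rintro s ⟨t, ht, rfl⟩
    apply MeasurableSpace.measurableSet_generateFrom
    refine ⟨fun i => if i = j then t else Set.univ, ?_, ⟨j+1, fun i hi => ?_⟩, ?_⟩
    · intro i; by_cases h : i = j <;> simp [h, ht]
    · have : i ≠ j := by omega
      simp [this]
    · ext x
      simp only [cylSet, Set.mem_preimage, Set.mem_setOf_eq]
      constructor
      · intro hx i; by_cases h : i = j <;> simp [h, hx]
      · intro hx; simpa using hx j
  · rintro S ⟨D, hDm, -, rfl⟩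
    exact measurableSet_cylSet hDm



section Tail

variable (ε : ℕ → ℝ)

/-- `Q j = 1 - ε j` as an extended nonneg real. -/
noncomputable def Q (j : ℕ) : ℝ≥0∞ := ENNReal.ofReal (1 - ε j)

/-- The tail product `∏_{j ≥ m} (1 - ε j)`, defined as an infimum of partial products. -/
noncomputable def Tprod (m : ℕ) : ℝ≥0∞ := ⨅ M, ∏ j ∈ Finset.Ico m M, Q ε j

variable {ε}

lemma Q_le_one (hε : ∀ n, 0 < ε n ∧ ε n < 1) (j : ℕ) : Q ε j ≤ 1 :=
  ENNReal.ofReal_le_one.2 (by linarith [(hε j).1])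

lemma Q_ne_zero (hε : ∀ n, 0 < ε n ∧ ε n < 1) (j : ℕ) : Q ε j ≠ 0 :=
  (ENNReal.ofReal_pos.2 (by linarith [(hε j).2])).ne'

lemma antitone_prodIco (hε : ∀ n, 0 < ε n ∧ ε n < 1) (m : ℕ) :
    Antitone (fun M => ∏ j ∈ Finset.Ico m M, Q ε j) := by
  intro M M' h
  simp only []
  by_cases hmM : m ≤ M
  · rw [← Finset.prod_Ico_consecutive (Q ε) hmM h]
    exact mul_le_of_le_one_right' (Finset.prod_le_one' fun j _ => Q_le_one hε j)
  · rw [show Finset.Ico m M = ∅ from Finset.Ico_eq_empty (by omega), Finset.prod_empty]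
    exact Finset.prod_le_one' fun j _ => Q_le_one hε j

lemma tendsto_prodIco (hε : ∀ n, 0 < ε n ∧ ε n < 1) (m : ℕ) :
    Tendsto (fun M => ∏ j ∈ Finset.Ico m M, Q ε j) atTop (𝓝 (Tprod ε m)) :=
  tendsto_atTop_iInf (antitone_prodIco hε m)

lemma Tprod_le_one (m : ℕ) : Tprod ε m ≤ 1 := by
  refine le_trans (iInf_le _ m) ?_
  simp

lemma prodIco_ne_top (m M : ℕ) : (∏ j ∈ Finset.Ico m M, Q ε j) ≠ ⊤ :=
  (ENNReal.prod_lt_top fun j _ => ENNReal.ofReal_lt_top).ne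

lemma Tprod_factor (hε : ∀ n, 0 < ε n ∧ ε n < 1) {m N : ℕ} (h : m ≤ N) :
    Tprod ε m = (∏ j ∈ Finset.Ico m N, Q ε j) * Tprod ε N := by
  refine tendsto_nhds_unique (tendsto_prodIco hε m) ?_
  have h2 : Tendsto (fun M => (∏ j ∈ Finset.Ico m N, Q ε j) * ∏ j ∈ Finset.Ico N M, Q ε j)
      atTop (𝓝 ((∏ j ∈ Finset.Ico m N, Q ε j) * Tprod ε N)) :=
    ENNReal.Tendsto.const_mul (tendsto_prodIco hε N) (Or.inr (prodIco_ne_top m N))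
  refine h2.congr' ?_
  filter_upwards [eventually_ge_atTop N] with M hM
  exact Finset.prod_Ico_consecutive (Q ε) h hM

lemma ofReal_exp_le_prodIco (hε : ∀ n, 0 < ε n ∧ ε n < 1) (hsum : Summable ε)
    {N : ℕ} (hhalf : ∀ j, N ≤ j → ε j ≤ 1/2) (M : ℕ) :
    ENNReal.ofReal (Real.exp (-(2 * ∑' k, ε (k + N)))) ≤ ∏ j ∈ Finset.Ico N M, Q ε j := by
  have hg : Summable fun k => ε (k + N) := (summable_nat_add_iff N).2 hsum
  have hsle : ∑ j ∈ Finset.Ico N M, ε j ≤ ∑' k, ε (k + N) := by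
    rw [Finset.sum_Ico_eq_sum_range]
    calc ∑ k ∈ Finset.range (M - N), ε (N + k)
        = ∑ k ∈ Finset.range (M - N), ε (k + N) := by
          refine Finset.sum_congr rfl fun k _ => by rw [add_comm]
      _ ≤ ∑' k, ε (k + N) := Summable.sum_le_tsum _ (fun k _ => (hε _).1.le) hg
  have h1 : Real.exp (-(2 * ∑' k, ε (k + N))) ≤
      Real.exp (-(2 * ∑ j ∈ Finset.Ico N M, ε j)) := by
    apply Real.exp_le_exp.2; nlinarith
  have h2 : Real.exp (-(2 * ∑ j ∈ Finset.Ico N M, ε j)) =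
      ∏ j ∈ Finset.Ico N M, Real.exp (-(2 * ε j)) := by
    rw [← Real.exp_sum]
    congr 1
    rw [Finset.mul_sum, ← Finset.sum_neg_distrib]
  have h3 : ∏ j ∈ Finset.Ico N M, Real.exp (-(2 * ε j)) ≤
      ∏ j ∈ Finset.Ico N M, (1 - ε j) :=
    Finset.prod_le_prod (fun j _ => (Real.exp_pos _).le)
      (fun j hj => exp_neg_two_mul_le (hε j).1.le (hhalf j (Finset.mem_Ico.1 hj).1))
  calc ENNReal.ofReal (Real.exp (-(2 * ∑' k, ε (k + N))))
      ≤ ENNReal.ofReal (∏ j ∈ Finset.Ico N M, (1 - ε j)) :=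
        ENNReal.ofReal_le_ofReal (le_trans h1 (h2 ▸ h3))
    _ = ∏ j ∈ Finset.Ico N M, Q ε j :=
        ENNReal.ofReal_prod_of_nonneg fun j _ => by linarith [(hε j).2]

lemma exists_half : ∀ (hsum : Summable ε), ∃ N : ℕ, ∀ j, N ≤ j → ε j ≤ 1/2 := by
  intro hsum
  have := hsum.tendsto_atTop_zero
  rw [Metric.tendsto_atTop] at this
  obtain ⟨N, hN⟩ := this (1/2) (by norm_num)
  exact ⟨N, fun j hj => by
    have := hN j hj
    rw [Real.dist_eq, sub_zero] at this
    exact le_of_lt (lt_of_abs_lt this)⟩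

lemma Tprod_ne_zero (hε : ∀ n, 0 < ε n ∧ ε n < 1) (hsum : Summable ε) (m : ℕ) :
    Tprod ε m ≠ 0 := by
  obtain ⟨N₀, hN₀⟩ := exists_half hsum
  set N := max m N₀ with hN
  have hfac := Tprod_factor hε (le_max_left m N₀)
  rw [hfac]
  refine mul_ne_zero ?_ ?_
  · exact (Finset.prod_ne_zero_iff.2 fun j _ => Q_ne_zero hε j)
  · have hb : ENNReal.ofReal (Real.exp (-(2 * ∑' k, ε (k + N)))) ≤ Tprod ε N :=
      le_iInf (ofReal_exp_le_prodIco hε hsum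
        (fun j hj => hN₀ j (le_trans (le_max_right m N₀) hj)))
    refine ne_of_gt (lt_of_lt_of_le ?_ hb)
    exact ENNReal.ofReal_pos.2 (Real.exp_pos _)

lemma Tprod_tendsto_one (hε : ∀ n, 0 < ε n ∧ ε n < 1) (hsum : Summable ε) :
    Tendsto (Tprod ε) atTop (𝓝 1) := by
  obtain ⟨N₀, hN₀⟩ := exists_half hsum
  have l1 : Tendsto (fun n => -(2 * ∑' k, ε (k + n))) atTop (𝓝 0) := by
    have := (tendsto_sum_nat_add ε).const_mul (2:ℝ)
    simpa using this.neg
  have l2 : Tendsto (fun n => Real.exp (-(2 * ∑' k, ε (k + n)))) atTop (𝓝 1) := by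
    have := (Real.continuous_exp.tendsto 0).comp l1
    simpa [Function.comp_def] using this
  have l3 : Tendsto (fun n => ENNReal.ofReal (Real.exp (-(2 * ∑' k, ε (k + n)))))
      atTop (𝓝 1) := by
    have := (ENNReal.continuous_ofReal.tendsto 1).comp l2
    simpa [Function.comp_def] using this
  refine tendsto_of_tendsto_of_tendsto_of_le_of_le' l3 tendsto_const_nhds ?_ ?_
  · filter_upwards [eventually_ge_atTop N₀] with n hn
    exact le_iInf (ofReal_exp_le_prodIco hε hsum (fun j hj => hN₀ j (le_trans hn hj)))
  · exact Eventually.of_forall fun n => Tprod_le_one n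

end Tail

section Meas

variable {Y : Type*} [MeasurableSpace Y] (γ : Measure Y) [IsProbabilityMeasure γ]
  (B : ℕ → Set Y) (ε : ℕ → ℝ)

open Classical in
/-- The density factor at coordinate `j`. -/
noncomputable def hfun (j : ℕ) (y : Y) : ℝ≥0∞ :=
  if y ∈ B j then ENNReal.ofReal (1 - ε j) else ENNReal.ofReal (ε j)

/-- The value of the measure `μ j` on a set. -/
noncomputable def νm (j : ℕ) (C : Set Y) : ℝ≥0∞ :=
  ENNReal.ofReal (2 * (1 - ε j)) * γ (C ∩ B j) + ENNReal.ofReal (2 * ε j) * γ (C \ B j)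

variable {B}

lemma measurable_hfun (hBm : ∀ n, MeasurableSet (B n)) (j : ℕ) :
    Measurable (hfun B ε j) :=
  Measurable.ite (hBm j) measurable_const measurable_const

lemma hfun_le_one (hε : ∀ n, 0 < ε n ∧ ε n < 1) (j : ℕ) (y : Y) : hfun B ε j y ≤ 1 := by
  unfold hfun; split
  · exact ENNReal.ofReal_le_one.2 (by linarith [(hε j).1])
  · exact ENNReal.ofReal_le_one.2 (by linarith [(hε j).2])

lemma hfun_ne_zero (hε : ∀ n, 0 < ε n ∧ ε n < 1) (j : ℕ) (y : Y) : hfun B ε j y ≠ 0 := by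
  unfold hfun; split
  · exact (ENNReal.ofReal_pos.2 (by linarith [(hε j).2])).ne'
  · exact (ENNReal.ofReal_pos.2 (hε j).1).ne'

lemma ofReal_two_mul (a : ℝ) : ENNReal.ofReal (2 * a) = 2 * ENNReal.ofReal a := by
  rw [ENNReal.ofReal_mul (by norm_num : (0:ℝ) ≤ 2), ENNReal.ofReal_ofNat]

lemma two_half : (2 : ℝ≥0∞) * (1 / 2) = 1 := by
  rw [one_div]
  exact ENNReal.mul_inv_cancel (by norm_num) (by norm_num)

variable {γ}

lemma withDensity_eq_νm (hBm : ∀ n, MeasurableSet (B n)) (j : ℕ) {C : Set Y}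
    (hC : MeasurableSet C) :
    (γ.withDensity fun y =>
        (B j).indicator (fun _ => ENNReal.ofReal (2 * (1 - ε j))) y +
          ((B j)ᶜ).indicator (fun _ => ENNReal.ofReal (2 * ε j)) y) C = νm γ B ε j C := by
  rw [withDensity_apply _ hC,
    lintegral_add_left (measurable_const.indicator (hBm j))]
  have h1 : ∫⁻ y in C, (B j).indicator (fun _ => ENNReal.ofReal (2 * (1 - ε j))) y ∂γ
      = ENNReal.ofReal (2 * (1 - ε j)) * γ (C ∩ B j) := by
    rw [lintegral_indicator_const (hBm j), Measure.restrict_apply (hBm j), Set.inter_comm]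
  have h2 : ∫⁻ y in C, ((B j)ᶜ).indicator (fun _ => ENNReal.ofReal (2 * ε j)) y ∂γ
      = ENNReal.ofReal (2 * ε j) * γ (C \ B j) := by
    rw [lintegral_indicator_const (hBm j).compl, Measure.restrict_apply (hBm j).compl,
      Set.inter_comm, Set.diff_eq]
  rw [h1, h2, νm]

lemma νm_ne_top (j : ℕ) (C : Set Y) : νm γ B ε j C ≠ ⊤ := by
  unfold νm
  exact ENNReal.add_ne_top.2 ⟨ENNReal.mul_ne_top ENNReal.ofReal_ne_top (measure_ne_top γ _),
    ENNReal.mul_ne_top ENNReal.ofReal_ne_top (measure_ne_top γ _)⟩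

lemma νm_univ (hBm : ∀ n, MeasurableSet (B n)) (hB : ∀ n, γ (B n) = 1 / 2)
    (hε : ∀ n, 0 < ε n ∧ ε n < 1) (j : ℕ) : νm γ B ε j Set.univ = 1 := by
  have hcompl : γ (B j)ᶜ = 1 / 2 := by
    rw [measure_compl (hBm j) (measure_ne_top γ _), hB j, measure_univ, one_div,
      ← ENNReal.inv_two_add_inv_two, ENNReal.add_sub_cancel_right (by norm_num)]
  unfold νm
  rw [Set.univ_inter, ← Set.compl_eq_univ_diff, hB j, hcompl, ← add_mul, ← ENNReal.ofReal_add
    (by linarith [(hε j).2]) (by linarith [(hε j).1]),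
    show 2 * (1 - ε j) + 2 * ε j = 2 by ring, ENNReal.ofReal_ofNat, two_half]

lemma νm_interB (j : ℕ) (C : Set Y) :
    νm γ B ε j (C ∩ B j) = Q ε j * (2 * γ (C ∩ B j)) := by
  unfold νm
  rw [Set.inter_assoc, Set.inter_self, Set.diff_eq, Set.inter_assoc, Set.inter_compl_self,
    Set.inter_empty, measure_empty, mul_zero, add_zero, ofReal_two_mul]
  unfold Q
  ring

end Meas


section Core

variable {Y : Type*} [MeasurableSpace Y] {γ : Measure Y} [IsProbabilityMeasure γ]
  {B : ℕ → Set Y} {ε : ℕ → ℝ}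

lemma cylSet_update_inter (D : ℕ → Set Y) (n : ℕ) (E : Set Y) :
    {x : ℕ → Y | x n ∈ E} ∩ cylSet D = cylSet (Function.update D n (D n ∩ E)) := by
  ext x
  simp only [cylSet, Set.mem_inter_iff, Set.mem_setOf_eq]
  constructor
  · rintro ⟨h1, h2⟩ j
    rcases eq_or_ne j n with rfl | hj
    · rw [Function.update_self]; exact ⟨h2 j, h1⟩
    · rw [Function.update_of_ne hj]; exact h2 j
  · intro h
    have hn := h n
    rw [Function.update_self] at hn
    refine ⟨hn.2, fun j => ?_⟩
    rcases eq_or_ne j n with rfl | hj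
    · exact hn.1
    · have := h j; rwa [Function.update_of_ne hj] at this

lemma lintegral_cyl (hBm : ∀ n, MeasurableSet (B n)) (hB : ∀ n, γ (B n) = 1 / 2)
    (hε : ∀ n, 0 < ε n ∧ ε n < 1) (μB : Measure (ℕ → Y))
    (hcylB : ∀ (m : ℕ) (C : ℕ → Set Y), (∀ j, MeasurableSet (C j)) →
      (∀ j, m ≤ j → C j = B j) →
      μB (cylSet C) = ∏ j ∈ Finset.range m, γ (C j) / γ (B j)) :
    ∀ (n m : ℕ) (D : ℕ → Set Y), n ≤ m → (∀ j, MeasurableSet (D j)) →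
      (∀ j, m ≤ j → D j = B j) →
      ∫⁻ x in cylSet D, ∏ j ∈ Finset.range n, hfun B ε j (x j) ∂μB
        = (∏ j ∈ Finset.range n, νm γ B ε j (D j)) *
            ∏ j ∈ Finset.Ico n m, (2 * γ (D j)) := by
  intro n
  induction n with
  | zero =>
    intro m D _ hDm hDt
    simp only [Finset.range_zero, Finset.prod_empty, one_mul]
    rw [setLIntegral_one, hcylB m D hDm hDt, Finset.range_eq_Ico]
    refine Finset.prod_congr rfl fun j _ => ?_
    rw [hB j, ENNReal.div_eq_inv_mul, one_div, inv_inv]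
  | succ n IH =>
    intro m D hnm hDm hDt
    have hF : Measurable fun x : ℕ → Y => ∏ j ∈ Finset.range n, hfun B ε j (x j) :=
      Finset.measurable_prod _ fun j _ =>
        (measurable_hfun ε hBm j).comp (measurable_pi_apply j)
    set U : Set (ℕ → Y) := {x | x n ∈ B n} with hUdef
    have hUm : MeasurableSet U := measurable_pi_apply n (hBm n)
    have key : ∀ x : ℕ → Y, ∏ j ∈ Finset.range (n+1), hfun B ε j (x j)
        = U.indicator (fun x => ENNReal.ofReal (1 - ε n) *
            ∏ j ∈ Finset.range n, hfun B ε j (x j)) x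
          + Uᶜ.indicator (fun x => ENNReal.ofReal (ε n) *
            ∏ j ∈ Finset.range n, hfun B ε j (x j)) x := by
      intro x
      rw [Finset.prod_range_succ]
      by_cases hx : x n ∈ B n
      · have hxU : x ∈ U := hx
        rw [Set.indicator_of_mem hxU, Set.indicator_of_notMem (by simpa [hUdef] using hx),
          add_zero, hfun, if_pos hx, mul_comm]
      · have hxU : x ∉ U := hx
        rw [Set.indicator_of_notMem hxU, Set.indicator_of_mem (by simpa [hUdef] using hx),
          zero_add, hfun, if_neg hx, mul_comm]
    rw [lintegral_congr key]
    rw [lintegral_add_left ((hF.const_mul _).indicator hUm)]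
    have hterm : ∀ (E : Set Y), MeasurableSet E → (E ⊆ B n ∨ E ⊆ (B n)ᶜ) → ∀ (c : ℝ≥0∞),
        ∫⁻ x in cylSet D, {x : ℕ → Y | x n ∈ E}.indicator
            (fun x => c * ∏ j ∈ Finset.range n, hfun B ε j (x j)) x ∂μB
          = c * ((∏ j ∈ Finset.range n, νm γ B ε j (D j)) *
              ((2 * γ (D n ∩ E)) * ∏ j ∈ Finset.Ico (n+1) m, (2 * γ (D j)))) := by
      intro E hE _ c
      have hEm : MeasurableSet {x : ℕ → Y | x n ∈ E} := measurable_pi_apply n hE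
      rw [lintegral_indicator hEm, Measure.restrict_restrict hEm, cylSet_update_inter,
        lintegral_const_mul c hF]
      have hupm : ∀ j, MeasurableSet (Function.update D n (D n ∩ E) j) := by
        intro j
        rcases eq_or_ne j n with rfl | hj
        · rw [Function.update_self]; exact (hDm j).inter hE
        · rw [Function.update_of_ne hj]; exact hDm j
      have hupt : ∀ j, m ≤ j → Function.update D n (D n ∩ E) j = B j := by
        intro j hj
        rw [Function.update_of_ne (by omega), hDt j hj]
      rw [IH m _ (by omega) hupm hupt]
      congr 1
      have h1 : ∏ j ∈ Finset.range n, νm γ B ε j (Function.update D n (D n ∩ E) j)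
          = ∏ j ∈ Finset.range n, νm γ B ε j (D j) := by
        refine Finset.prod_congr rfl fun j hj => ?_
        rw [Function.update_of_ne (by simp at hj; omega)]
      have h2 : ∏ j ∈ Finset.Ico n m, (2 * γ (Function.update D n (D n ∩ E) j))
          = (2 * γ (D n ∩ E)) * ∏ j ∈ Finset.Ico (n+1) m, (2 * γ (D j)) := by
        rw [Finset.prod_eq_prod_Ico_succ_bot (show n < m by omega)]
        congr 1
        · rw [Function.update_self]
        · refine Finset.prod_congr rfl fun j hj => ?_
          rw [Function.update_of_ne (by simp [Finset.mem_Ico] at hj; omega)]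
      rw [h1, h2]
    rw [hterm (B n) (hBm n) (Or.inl subset_rfl) _]
    have hcompl : Uᶜ = {x : ℕ → Y | x n ∈ (B n)ᶜ} := by
      ext x; simp [hUdef]
    rw [hcompl, hterm ((B n)ᶜ) (hBm n).compl (Or.inr subset_rfl) _]
    rw [Finset.prod_range_succ]
    have hd : D n \ B n = D n ∩ (B n)ᶜ := Set.diff_eq _ _
    rw [show νm γ B ε n (D n)
        = ENNReal.ofReal (2 * (1 - ε n)) * γ (D n ∩ B n)
          + ENNReal.ofReal (2 * ε n) * γ (D n ∩ (B n)ᶜ) by rw [νm, hd]]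
    rw [ofReal_two_mul, ofReal_two_mul]
    ring

lemma pi_cyl (hBm : ∀ n, MeasurableSet (B n)) (hB : ∀ n, γ (B n) = 1 / 2)
    (hε : ∀ n, 0 < ε n ∧ ε n < 1) (π : Measure (ℕ → Y)) [IsFiniteMeasure π]
    (hcylπ : ∀ (m : ℕ) (C : ℕ → Set Y), (∀ j, MeasurableSet (C j)) →
      (∀ j, m ≤ j → C j = Set.univ) →
      π (cylSet C) = ∏ j ∈ Finset.range m, νm γ B ε j (C j)) :
    ∀ (m : ℕ) (D : ℕ → Set Y), (∀ j, MeasurableSet (D j)) → (∀ j, m ≤ j → D j = B j) →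
      π (cylSet D) = (∏ j ∈ Finset.range m, νm γ B ε j (D j)) * Tprod ε m := by
  intro m D hDm hDt
  classical
  set s : ℕ → Set (ℕ → Y) := fun M => cylSet (fun j => if j < M then D j else Set.univ)
    with hsdef
  have hsm : ∀ M, MeasurableSet (s M) := by
    intro M
    refine measurableSet_cylSet fun j => ?_
    by_cases h : j < M <;> simp [h, hDm j]
  have hmono : Antitone s := by
    intro M M' hMM' x hx
    simp only [hsdef, cylSet, Set.mem_setOf_eq] at hx ⊢
    intro j
    by_cases h : j < M
    · rw [if_pos h]
      have := hx j
      rwa [if_pos (lt_of_lt_of_le h hMM')] at this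
    · rw [if_neg h]; trivial
  have hiInt : ⋂ M, s M = cylSet D := by
    ext x
    simp only [Set.mem_iInter, hsdef, cylSet, Set.mem_setOf_eq]
    constructor
    · intro hx j
      have := hx (j+1) j
      rwa [if_pos (Nat.lt_succ_self j)] at this
    · intro hx M j
      by_cases h : j < M
      · rw [if_pos h]; exact hx j
      · rw [if_neg h]; trivial
  have t1 : Tendsto (fun M => π (s M)) atTop (𝓝 (π (cylSet D))) := by
    have := tendsto_measure_iInter_atTop (fun M => (hsm M).nullMeasurableSet) hmono
      ⟨0, measure_ne_top π _⟩
    rwa [hiInt] at this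
  have hval : ∀ M, m ≤ M → π (s M)
      = (∏ j ∈ Finset.range m, νm γ B ε j (D j)) * ∏ j ∈ Finset.Ico m M, Q ε j := by
    intro M hM
    have := hcylπ M (fun j => if j < M then D j else Set.univ)
      (fun j => by by_cases h : j < M <;> simp [h, hDm j])
      (fun j hj => by have h : ¬ j < M := by omega
                      simp only [h, if_false])
    rw [hsdef]
    rw [this]
    have hsplit : Finset.range M = Finset.Ico 0 m ∪ Finset.Ico m M := by
      rw [Finset.range_eq_Ico, ← Finset.Ico_union_Ico_eq_Ico (Nat.zero_le m) hM]
    rw [Finset.range_eq_Ico, ← Finset.prod_Ico_consecutive _ (Nat.zero_le m) hM,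
      ← Finset.range_eq_Ico]
    congr 1
    · refine Finset.prod_congr rfl fun j hj => ?_
      have h : j < M := by simp at hj; omega
      simp only [h, if_true]
    · refine Finset.prod_congr rfl fun j hj => ?_
      simp only [Finset.mem_Ico] at hj
      have h : j < M := by omega
      simp only [h, if_true]
      rw [hDt j hj.1]
      -- νm of B j equals Q j
      have := νm_interB (γ := γ) (B := B) ε j Set.univ
      rw [Set.univ_inter] at this
      rw [this, hB j, two_half, mul_one]
  have t2 : Tendsto (fun M => π (s M)) atTop
      (𝓝 ((∏ j ∈ Finset.range m, νm γ B ε j (D j)) * Tprod ε m)) := by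
    have hc : (∏ j ∈ Finset.range m, νm γ B ε j (D j)) ≠ ⊤ :=
      (ENNReal.prod_lt_top fun j _ => (νm_ne_top ε j (D j)).lt_top).ne
    refine (ENNReal.Tendsto.const_mul (tendsto_prodIco hε m) (Or.inr hc)).congr' ?_
    filter_upwards [eventually_ge_atTop m] with M hM
    exact (hval M hM).symm
  exact tendsto_nhds_unique t1 t2

end Core


end RPEIP

open RPEIP in
/-- **From the proof of Theorem B (via Hill's theorems).** The restricted infinite power
`γ^𝐁` is equivalent to the infinite product `⊗ₙ μₙ` of the probability measures `μₙ` with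
densities `dμₙ/dγ = 2 εₙ 1_{Y∖Bₙ} + 2 (1 − εₙ) 1_{Bₙ}`, provided `∑ εₙ < ∞`. -/
theorem restrictedPower_equiv_infiniteProduct {Y : Type*} [MeasurableSpace Y]
    [StandardBorelSpace Y]
    (γ : Measure Y) [IsProbabilityMeasure γ] (hna : ∀ y : Y, γ {y} = 0)
    (B : ℕ → Set Y) (hBm : ∀ n, MeasurableSet (B n)) (hB : ∀ n, γ (B n) = 1 / 2)
    (ε : ℕ → ℝ) (hε : ∀ n, 0 < ε n ∧ ε n < 1) (hsum : Summable ε)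
    (μB : Measure (ℕ → Y))
    (hcylB : ∀ (m : ℕ) (C : ℕ → Set Y), (∀ j, MeasurableSet (C j)) →
      (∀ j, m ≤ j → C j = B j) →
      μB {x : ℕ → Y | ∀ j, x j ∈ C j} = ∏ j ∈ Finset.range m, γ (C j) / γ (B j))
    (hsuppB : μB ((⋃ n, tailCylinder B n)ᶜ) = 0)
    (π : Measure (ℕ → Y))
    (hcylπ : ∀ (m : ℕ) (C : ℕ → Set Y), (∀ j, MeasurableSet (C j)) →
      (∀ j, m ≤ j → C j = Set.univ) →
      π {x : ℕ → Y | ∀ j, x j ∈ C j} = ∏ j ∈ Finset.range m,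
        (γ.withDensity fun y =>
          (B j).indicator (fun _ => ENNReal.ofReal (2 * (1 - ε j))) y +
            ((B j)ᶜ).indicator (fun _ => ENNReal.ofReal (2 * ε j)) y) (C j)) :
    μB ≪ π ∧ π ≪ μB := by
    classical
  have hcylB' : ∀ (m : ℕ) (C : ℕ → Set Y), (∀ j, MeasurableSet (C j)) →
      (∀ j, m ≤ j → C j = B j) →
      μB (cylSet C) = ∏ j ∈ Finset.range m, γ (C j) / γ (B j) := hcylB
  have hπuniv : π Set.univ = 1 := by
    have h0 := hcylπ 0 (fun _ => Set.univ) (fun _ => MeasurableSet.univ) (fun _ _ => rfl)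
    simpa using h0
  haveI : IsProbabilityMeasure π := ⟨hπuniv⟩
  have hcylπ' : ∀ (m : ℕ) (C : ℕ → Set Y), (∀ j, MeasurableSet (C j)) →
      (∀ j, m ≤ j → C j = Set.univ) →
      π (cylSet C) = ∏ j ∈ Finset.range m, νm γ B ε j (C j) := by
    intro m C hC ht
    have h0 := hcylπ m C hC ht
    rw [show π (cylSet C) = π {x : ℕ → Y | ∀ j, x j ∈ C j} from rfl, h0]
    exact Finset.prod_congr rfl fun j _ => withDensity_eq_νm ε hBm j (hC j)
  have hTC : ∀ n, tailCylinder B n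
      = cylSet (fun j => if j < n then Set.univ else B j) := by
    intro n; ext x
    simp only [tailCylinder, cylSet, Set.mem_setOf_eq]
    constructor
    · intro hx j
      by_cases h : j < n
      · simp [h]
      · simp only [h, if_false]; exact hx j (by omega)
    · intro hx j hj
      have := hx j
      rwa [if_neg (by omega)] at this
  have hTCDm : ∀ n j, MeasurableSet (if j < n then (Set.univ : Set Y) else B j) :=
    fun n j => by by_cases h : j < n <;> simp [h, hBm j]
  have hTCDt : ∀ n j, n ≤ j → (if j < n then (Set.univ : Set Y) else B j) = B j :=
    fun n j hj => by rw [if_neg (by omega)]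
  have hTCmeas : ∀ n, MeasurableSet (tailCylinder B n) := by
    intro n; rw [hTC n]
    exact measurableSet_cylSet (hTCDm n)
  have hgmeas : ∀ n, Measurable fun x : ℕ → Y =>
      ∏ j ∈ Finset.range n, hfun B ε j (x j) :=
    fun n => Finset.measurable_prod _ fun j _ =>
      (measurable_hfun ε hBm j).comp (measurable_pi_apply j)
  have hFmeas : ∀ n, Measurable fun x : ℕ → Y =>
      Tprod ε n * ∏ j ∈ Finset.range n, hfun B ε j (x j) :=
    fun n => (hgmeas n).const_mul _
  have hFpos : ∀ n (x : ℕ → Y),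
      (Tprod ε n * ∏ j ∈ Finset.range n, hfun B ε j (x j)) ≠ 0 := fun n x =>
    mul_ne_zero (Tprod_ne_zero hε hsum n)
      (Finset.prod_ne_zero_iff.2 fun j _ => hfun_ne_zero ε hε j (x j))
  -- The key identity: on each tail cylinder, π is μB with an explicit positive density.
  have key : ∀ n, π.restrict (tailCylinder B n)
      = (μB.restrict (tailCylinder B n)).withDensity
          (fun x => Tprod ε n * ∏ j ∈ Finset.range n, hfun B ε j (x j)) := by
    intro n
    have hsets : ∀ (D : ℕ → Set Y) (m₀ : ℕ), (∀ j, MeasurableSet (D j)) →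
        (∀ j, m₀ ≤ j → D j = Set.univ) →
        (π.restrict (tailCylinder B n)) (cylSet D)
          = ((μB.restrict (tailCylinder B n)).withDensity
              (fun x => Tprod ε n * ∏ j ∈ Finset.range n, hfun B ε j (x j)))
              (cylSet D) := by
      intro D m₀ hDm hDt
      set m := max m₀ n with hm
      have hnm : n ≤ m := le_max_right _ _
      set D' : ℕ → Set Y := fun j => if j < n then D j else D j ∩ B j with hD'
      have hD'm : ∀ j, MeasurableSet (D' j) := fun j => by
        by_cases h : j < n <;> simp [hD', h, hDm j, (hDm j).inter (hBm j)]
      have hD't : ∀ j, m ≤ j → D' j = B j := by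
        intro j hj
        have h1 : ¬ j < n := by omega
        simp only [hD', h1, if_false]
        rw [hDt j (by omega), Set.univ_inter]
      have hinter : cylSet D ∩ tailCylinder B n = cylSet D' := by
        rw [hTC n, cylSet_inter]
        have heq : (fun j => D j ∩ (if j < n then Set.univ else B j)) = D' := by
          funext j
          by_cases h : j < n <;> simp [hD', h]
        rw [heq]
      rw [Measure.restrict_apply (measurableSet_cylSet hDm), hinter,
        pi_cyl hBm hB hε π hcylπ' m D' hD'm hD't,
        withDensity_apply _ (measurableSet_cylSet hDm),
        Measure.restrict_restrict (measurableSet_cylSet hDm), hinter,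
        lintegral_const_mul _ (hgmeas n),
        lintegral_cyl hBm hB hε μB hcylB' n m D' hnm hD'm hD't]
      have hsplit : ∏ j ∈ Finset.range m, νm γ B ε j (D' j)
          = (∏ j ∈ Finset.range n, νm γ B ε j (D' j)) *
              ∏ j ∈ Finset.Ico n m, νm γ B ε j (D' j) := by
        rw [Finset.range_eq_Ico, ← Finset.prod_Ico_consecutive _ (Nat.zero_le n) hnm,
          ← Finset.range_eq_Ico]
      rw [hsplit]
      have hIco : ∏ j ∈ Finset.Ico n m, νm γ B ε j (D' j)
          = (∏ j ∈ Finset.Ico n m, Q ε j) * ∏ j ∈ Finset.Ico n m, (2 * γ (D' j)) := by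
        rw [← Finset.prod_mul_distrib]
        refine Finset.prod_congr rfl fun j hj => ?_
        simp only [Finset.mem_Ico] at hj
        have h1 : ¬ j < n := by omega
        simp only [hD', h1, if_false]
        exact νm_interB ε j (D j)
      rw [hIco, Tprod_factor hε hnm]
      ring
    refine MeasureTheory.ext_of_generate_finite (cylPi Y) generateFrom_cylPi
      isPiSystem_cylPi ?_ ?_
    · rintro S ⟨D, hDm, ⟨m₀, hm₀⟩, rfl⟩
      exact hsets D m₀ hDm hm₀
    · have huniv : (Set.univ : Set (ℕ → Y)) = cylSet (fun _ => Set.univ) := by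
        ext x; simp [cylSet]
      rw [huniv]
      exact hsets (fun _ => Set.univ) 0 (fun _ => MeasurableSet.univ) (fun _ _ => rfl)
  have hπTC : ∀ n, π (tailCylinder B n) = Tprod ε n := by
    intro n
    rw [hTC n, pi_cyl hBm hB hε π hcylπ' n _ (hTCDm n) (hTCDt n)]
    have h1 : ∏ j ∈ Finset.range n, νm γ B ε j (if j < n then Set.univ else B j)
        = 1 := by
      refine Finset.prod_eq_one fun j hj => ?_
      have h : j < n := Finset.mem_range.1 hj
      simp only [h, if_true]
      exact νm_univ ε hBm hB hε j
    rw [h1, one_mul]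
  have hUmeas : MeasurableSet (⋃ n, tailCylinder B n) := MeasurableSet.iUnion hTCmeas
  have hπU : π (⋃ n, tailCylinder B n) = 1 := by
    refine le_antisymm prob_le_one ?_
    refine le_of_tendsto (Tprod_tendsto_one hε hsum) (Filter.Eventually.of_forall fun n => ?_)
    rw [← hπTC n]
    exact measure_mono (Set.subset_iUnion _ n)
  have hπUc : π ((⋃ n, tailCylinder B n)ᶜ) = 0 := by
    rw [measure_compl hUmeas (measure_ne_top π _), hπU, measure_univ, tsub_self]
  constructor
  · -- μB ≪ π
    refine Measure.AbsolutelyContinuous.mk fun A hA hA0 => ?_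
    have hn : ∀ n, μB (A ∩ tailCylinder B n) = 0 := by
      intro n
      have h0 : (π.restrict (tailCylinder B n)) A = 0 := by
        rw [Measure.restrict_apply hA]
        exact le_antisymm (le_trans (measure_mono Set.inter_subset_left) hA0.le) zero_le
      rw [key n, withDensity_apply _ hA] at h0
      have h1 := (lintegral_eq_zero_iff (hFmeas n)).1 h0
      rw [Filter.EventuallyEq, ae_iff] at h1
      simp only [Pi.zero_apply] at h1
      have h2 : {x : ℕ → Y | ¬ (Tprod ε n * ∏ j ∈ Finset.range n, hfun B ε j (x j)
          = 0)} = Set.univ := Set.eq_univ_of_forall fun x => hFpos n x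
      rw [h2, Measure.restrict_apply_univ, Measure.restrict_apply hA] at h1
      exact h1
    have hsplitA : μB A ≤ μB (⋃ n, A ∩ tailCylinder B n)
        + μB ((⋃ n, tailCylinder B n)ᶜ) := by
      refine le_trans (measure_mono ?_) (measure_union_le _ _)
      intro x hx
      by_cases h : x ∈ ⋃ n, tailCylinder B n
      · left
        rw [← Set.inter_iUnion]
        exact ⟨hx, h⟩
      · right; exact h
    have h3 : μB (⋃ n, A ∩ tailCylinder B n) = 0 := by
      refine le_antisymm (le_trans (measure_iUnion_le _) ?_) zero_le
      simp [hn]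
    rw [h3, hsuppB, add_zero] at hsplitA
    exact le_antisymm hsplitA zero_le
  · -- π ≪ μB
    refine Measure.AbsolutelyContinuous.mk fun A hA hA0 => ?_
    have hn : ∀ n, π (A ∩ tailCylinder B n) = 0 := by
      intro n
      have h0 : (μB.restrict (tailCylinder B n)) A = 0 := by
        rw [Measure.restrict_apply hA]
        exact le_antisymm (le_trans (measure_mono Set.inter_subset_left) hA0.le) zero_le
      have h1 : (π.restrict (tailCylinder B n)) A = 0 := by
        rw [key n, withDensity_apply _ hA]
        exact setLIntegral_measure_zero _ _ h0
      rwa [Measure.restrict_apply hA] at h1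
    have hsplitA : π A ≤ π (⋃ n, A ∩ tailCylinder B n)
        + π ((⋃ n, tailCylinder B n)ᶜ) := by
      refine le_trans (measure_mono ?_) (measure_union_le _ _)
      intro x hx
      by_cases h : x ∈ ⋃ n, tailCylinder B n
      · left
        rw [← Set.inter_iUnion]
        exact ⟨hx, h⟩
      · right; exact h
    have h3 : π (⋃ n, A ∩ tailCylinder B n) = 0 := by
      refine le_antisymm (le_trans (measure_iUnion_le _) ?_) zero_le
      simp [hn]
    rw [h3, hπUc, add_zero] at hsplitA
    exact le_antisymm hsplitA zero_le
end
end
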